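/- We have $\sum_{n=1}^{\infty} \frac{\mu(n)}{\operatorname{lcm}(5,n)^3} = 0$. -/

import Mathlib

open ArithmeticFunction
open scoped ArithmeticFunction.Moebius

/-- `∑ μ(n)/lcm(5,n)³ = 0`. -/
theorem stmt_3 :
    ∑' n : ℕ, (μ n : ℝ) / (Nat.lcm 5 n : ℝ) ^ 3 = 0 := by
  set f : ℕ → ℝ := fun n => (μ n : ℝ) / (Nat.lcm 5 n : ℝ) ^ 3 with hf
  have hp5 : Nat.Prime 5 := by norm_num
  have hsum : Summable f := by
    apply Summable.of_norm
    apply Summable.of_nonneg_of_le (fun n => norm_nonneg _) (fun n => ?_)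
      ((Real.summable_one_div_nat_pow (p := 3)).mpr (by norm_num))
    rcases Nat.eq_zero_or_pos n with rfl | hn
    · simp [hf]
    · have hlcm : (n : ℝ) ≤ (Nat.lcm 5 n : ℝ) := by
        exact_mod_cast Nat.le_of_dvd (Nat.pos_of_ne_zero (by
          simp [Nat.lcm_ne_zero, hn.ne'])) (Nat.dvd_lcm_right 5 n)
      have hn' : (0:ℝ) < n := by exact_mod_cast hn
      have hlpos : (0:ℝ) < (Nat.lcm 5 n : ℝ) := lt_of_lt_of_le hn' hlcm
      have hnorm : ‖f n‖ = ‖((μ n : ℤ) : ℝ)‖ / (Nat.lcm 5 n : ℝ) ^ 3 := by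
        rw [hf, norm_div, Real.norm_eq_abs ((Nat.lcm 5 n : ℝ) ^ 3),
          abs_of_nonneg (by positivity)]
      rw [hnorm]
      apply div_le_div₀ zero_le_one ?_ (pow_pos hn' 3) (by gcongr)
      have := abs_moebius_le_one (n := n)
      rw [Real.norm_eq_abs]
      exact_mod_cast this
  set s : Set ℕ := {n | 5 ∣ n} with hs
  have key : ∀ m : ℕ, f (5 * m) = - (sᶜ.indicator f m) := by
    intro m
    by_cases h : 5 ∣ m
    · have h1 : sᶜ.indicator f m = 0 := Set.indicator_of_notMem (by simpa [hs]) f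
      rw [h1, neg_zero]
      rcases Nat.eq_zero_or_pos m with rfl | hm
      · simp [hf]
      · have : ¬ Squarefree (5 * m) := by
          intro hsq
          obtain ⟨k, rfl⟩ := h
          have := hsq 5 ⟨k, by ring⟩
          rw [Nat.isUnit_iff] at this
          norm_num at this
        simp [hf, moebius_eq_zero_of_not_squarefree this]
    · have hcop : Nat.Coprime 5 m := (hp5.coprime_iff_not_dvd).mpr h
      have h1 : sᶜ.indicator f m = f m := Set.indicator_of_mem (by simpa [hs]) f
      rw [h1]
      have hlcm1 : Nat.lcm 5 (5 * m) = 5 * m := by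
        conv_lhs => rw [show (5:ℕ) = 5 * 1 by norm_num, Nat.lcm_mul_left]
        simp
      have hlcm2 : Nat.lcm 5 m = 5 * m := hcop.lcm_eq_mul
      have hmu : μ (5 * m) = μ 5 * μ m :=
        isMultiplicative_moebius.map_mul_of_coprime hcop
      rw [hf]
      simp only [hlcm1, hlcm2, hmu, moebius_apply_prime hp5]
      push_cast
      ring
  have h1 : ∑' (x : ↑s), f ↑x = ∑' m : ℕ, f (5 * m) :=
    (Equiv.tsum_eq
      ({ toFun := fun m => ⟨5 * m, ⟨m, rfl⟩⟩
         invFun := fun p => p.1 / 5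
         left_inv := fun m => by simp
         right_inv := fun p => by
           obtain ⟨n, hn⟩ := p
           obtain ⟨k, rfl⟩ := hn
           simp } : ℕ ≃ ↑s)
      fun b => f ↑b).symm
  have h2 : ∑' (x : ↑sᶜ), f ↑x = ∑' n : ℕ, sᶜ.indicator f n := tsum_subtype _ _
  have h3 : ∑' m : ℕ, f (5 * m) = - ∑' n : ℕ, sᶜ.indicator f n := by
    rw [← tsum_neg]
    exact tsum_congr key
  calc ∑' n : ℕ, f n = ∑' (x : ↑s), f ↑x + ∑' (x : ↑sᶜ), f ↑x :=
        (Summable.tsum_add_tsum_compl (hsum.subtype _) (hsum.subtype _)).symm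
    _ = 0 := by rw [h1, h2, h3, neg_add_cancel]
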